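/- Let G be a finite set of groups with n = |G| and fix a_g, b_g ∈ [0,1] for each g ∈ G. For q : G → [0,1], define β_g(q) = a_g·q_g + b_g·(1 − q_g) and Δ(q) = Σ over unordered pairs {g,h} of distinct groups of |β_g(q) − β_h(q)|. If q, q' : G → [0,1] satisfy |q_g − q'_g| ≤ B_g for every g ∈ G, then Δ(q') ≤ Δ(q) + (n − 1)·Σ_{g∈G} B_g·|a_g − b_g|. -/

import Mathlib

open Finset

private theorem sum_offDiag_fst_aux {G : Type*} [Fintype G] [DecidableEq G] (f : G → ℝ)
    (hcard : 1 ≤ Fintype.card G) :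
    ∑ p ∈ Finset.univ.offDiag (α := G), f p.1 = ((Fintype.card G : ℝ) - 1) * ∑ g, f g := by
  rw [show Finset.univ.offDiag (α := G) = (Finset.univ ×ˢ Finset.univ).filter (fun a => a.1 ≠ a.2) by
    ext; simp [Finset.mem_offDiag]]
  rw [Finset.sum_filter, Finset.sum_product, Finset.mul_sum]
  refine Finset.sum_congr rfl fun g _ => ?_
  rw [Finset.sum_ite]
  simp only [ne_eq, smul_zero, add_zero, Finset.sum_const, Finset.filter_ne,
    Finset.card_erase_of_mem (Finset.mem_univ g), Finset.card_univ, nsmul_eq_mul]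
  push_cast [hcard]
  ring

private theorem sum_pairs_eq_aux {G : Type*} [Fintype G] [DecidableEq G] [LinearOrder G]
    (f : G → ℝ) (hcard : 1 ≤ Fintype.card G) :
    ∑ p ∈ (Finset.univ.offDiag (α := G)).filter (fun p => p.1 < p.2), (f p.1 + f p.2)
      = ((Fintype.card G : ℝ) - 1) * ∑ g, f g := by
  rw [Finset.sum_add_distrib]
  have h2 : ∑ p ∈ (Finset.univ.offDiag (α := G)).filter (fun p => p.1 < p.2), f p.2
      = ∑ p ∈ (Finset.univ.offDiag (α := G)).filter (fun p => ¬ p.1 < p.2), f p.1 := by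
    have : (Finset.univ.offDiag (α := G)).filter (fun p => ¬ p.1 < p.2)
        = (Finset.univ.offDiag (α := G)).filter (fun p => p.2 < p.1) := by
      apply Finset.filter_congr
      intro p hp
      simp only [Finset.mem_offDiag] at hp
      simp only [not_lt, eq_iff_iff]
      constructor
      · intro h; exact lt_of_le_of_ne h (fun e => hp.2.2 e.symm)
      · exact le_of_lt
    rw [this]
    refine Finset.sum_nbij' (fun p => Prod.swap p) (fun p => Prod.swap p) ?_ ?_ ?_ ?_ ?_ <;>
      simp [Finset.mem_offDiag, and_comm, ne_comm, eq_comm]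
  rw [h2, Finset.sum_filter_add_sum_filter_not, sum_offDiag_fst_aux f hcard]

/-- The demographic-parity disparity `Δ(q)` of a policy with group true positive
rates `a`, false positive rates `b`, and group qualification rates `q`: the sum over
unordered pairs of distinct groups of the absolute difference of acceptance rates
`β_g(q) = a g * q g + b g * (1 − q g)`. -/
noncomputable def dpDisparity {G : Type*} [Fintype G] [DecidableEq G]
    (a b q : G → ℝ) : ℝ :=
  ∑ p ∈ Finset.univ.sym2.filter (fun p => ¬ p.IsDiag),
    Sym2.lift ⟨fun g h =>
      |(a g * q g + b g * (1 - q g)) - (a h * q h + b h * (1 - q h))|,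
      fun _ _ => abs_sub_comm _ _⟩ p

/-- **Theorem 6 (demographic parity under bounded label shift).** If the source and
target qualification rates satisfy `|q g − q' g| ≤ B g` for every group `g`, then the
target demographic-parity disparity is bounded by the source disparity plus
`(|G| − 1) · ∑ g, B g · |a g − b g|`. -/
theorem dp_label_shift_bound {G : Type*} [Fintype G] [DecidableEq G]
    (a b : G → ℝ) (ha : ∀ g, 0 ≤ a g ∧ a g ≤ 1) (hb : ∀ g, 0 ≤ b g ∧ b g ≤ 1)
    (q q' : G → ℝ) (hq : ∀ g, 0 ≤ q g ∧ q g ≤ 1) (hq' : ∀ g, 0 ≤ q' g ∧ q' g ≤ 1)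
    (B : G → ℝ) (hB : ∀ g, |q g - q' g| ≤ B g) :
    dpDisparity a b q' ≤ dpDisparity a b q
      + ((Fintype.card G : ℝ) - 1) * ∑ g : G, B g * |a g - b g| := by
  rcases isEmpty_or_nonempty G with hG | hG
  · simp [dpDisparity, Finset.univ_eq_empty]
  have hcard : 1 ≤ Fintype.card G := Fintype.card_pos
  letI : LinearOrder G := LinearOrder.lift' (Fintype.equivFin G) (Fintype.equivFin G).injective
  set β : (G → ℝ) → G → ℝ := fun r g => a g * r g + b g * (1 - r g) with hβ
  set f : G → ℝ := fun g => B g * |a g - b g| with hf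
  have key : ∀ g, |β q' g - β q g| ≤ f g := by
    intro g
    have : β q' g - β q g = (a g - b g) * (q' g - q g) := by simp only [hβ]; ring
    rw [this, abs_mul]
    calc |a g - b g| * |q' g - q g| = |q g - q' g| * |a g - b g| := by
          rw [abs_sub_comm (q' g)]; ring
      _ ≤ B g * |a g - b g| := mul_le_mul_of_nonneg_right (hB g) (abs_nonneg _)
  have hrw : ∀ r : G → ℝ, dpDisparity a b r
      = ∑ p ∈ (Finset.univ.offDiag (α := G)).filter (fun p => p.1 < p.2),
          |β r p.1 - β r p.2| := by
    intro r
    have h := Finset.sum_sym2_filter_not_isDiag (Finset.univ : Finset G)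
      (Sym2.lift ⟨fun g h =>
        |(a g * r g + b g * (1 - r g)) - (a h * r h + b h * (1 - r h))|,
        fun _ _ => abs_sub_comm _ _⟩)
    rw [dpDisparity]
    refine Eq.trans ?_ (h.trans ?_)
    · congr!
    · exact Finset.sum_congr (by congr!) (fun p _ => rfl)
  rw [hrw, hrw, ← sum_pairs_eq_aux f hcard, ← Finset.sum_add_distrib]
  apply Finset.sum_le_sum
  intro p _
  have h1 := key p.1
  have h2 := key p.2
  have hsplit : β q' p.1 - β q' p.2
      = (β q p.1 - β q p.2) + ((β q' p.1 - β q p.1) - (β q' p.2 - β q p.2)) := by ring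
  rw [hsplit]
  calc _ ≤ |β q p.1 - β q p.2| + |(β q' p.1 - β q p.1) - (β q' p.2 - β q p.2)| := abs_add_le _ _
    _ ≤ |β q p.1 - β q p.2| + (|β q' p.1 - β q p.1| + |β q' p.2 - β q p.2|) := by
        gcongr; exact abs_sub _ _
    _ ≤ |β q p.1 - β q p.2| + (f p.1 + f p.2) := by gcongr
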